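/- Let μ ≥ 1 be an integer, let g : ℝ → ℝ be (μ-1) times continuously differentiable in a neighborhood of a point x₀, and let f = g². If g(x₀) ≠ 0 and f^{(s)}(x₀) = 0 for s = 1,...,μ-1, then g^{(s)}(x₀) = 0 for s = 1,...,μ-1. -/

import Mathlib

open Finset

/-- Pascal-style rearrangement of the sum appearing in the Leibniz rule. -/
lemma sum_pascal_aux (n : ℕ) (F G : ℕ → ℝ) :
    ∑ i ∈ range (n + 1),
        (((n.choose i : ℝ) * F (i + 1)) * G (n - i)
          + ((n.choose i : ℝ) * F i) * G (n - i + 1))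
      = ∑ i ∈ range (n + 1 + 1), ((n + 1).choose i : ℝ) * F i * G (n + 1 - i) := by
  rw [Finset.sum_add_distrib]
  have hRHS : ∑ i ∈ range (n + 1 + 1), ((n + 1).choose i : ℝ) * F i * G (n + 1 - i)
      = (∑ i ∈ range (n + 1), ((n + 1).choose (i + 1) : ℝ) * F (i + 1) * G (n + 1 - (i + 1)))
        + ((n + 1).choose 0 : ℝ) * F 0 * G (n + 1 - 0) :=
    Finset.sum_range_succ' _ (n + 1)
  rw [hRHS]
  have h1 : ∑ i ∈ range (n + 1), ((n + 1).choose (i + 1) : ℝ) * F (i + 1) * G (n + 1 - (i + 1))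
      = ∑ i ∈ range (n + 1),
          (((n.choose i : ℝ) * F (i + 1)) * G (n - i)
            + ((n.choose (i + 1) : ℝ) * F (i + 1)) * G (n - i)) := by
    refine Finset.sum_congr rfl fun i _ => ?_
    rw [Nat.choose_succ_succ, Nat.succ_sub_succ]
    push_cast
    ring
  rw [h1, Finset.sum_add_distrib]
  have h2 : ∑ i ∈ range (n + 1), ((n.choose i : ℝ) * F i) * G (n - i + 1)
      = (∑ i ∈ range (n + 1), ((n.choose (i + 1) : ℝ) * F (i + 1)) * G (n - i))
        + ((n + 1).choose 0 : ℝ) * F 0 * G (n + 1 - 0) := by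
    have e1 : ∑ i ∈ range (n + 1 + 1), ((n.choose i : ℝ) * F i) * G (n + 1 - i)
        = (∑ i ∈ range (n + 1), ((n.choose (i + 1) : ℝ) * F (i + 1)) * G (n + 1 - (i + 1)))
          + ((n.choose 0 : ℝ) * F 0) * G (n + 1 - 0) :=
      Finset.sum_range_succ' _ (n + 1)
    have e2 : ∑ i ∈ range (n + 1 + 1), ((n.choose i : ℝ) * F i) * G (n + 1 - i)
        = (∑ i ∈ range (n + 1), ((n.choose i : ℝ) * F i) * G (n + 1 - i))
          + ((n.choose (n + 1) : ℝ) * F (n + 1)) * G (n + 1 - (n + 1)) :=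
      Finset.sum_range_succ _ (n + 1)
    have e3 : ∑ i ∈ range (n + 1), ((n.choose i : ℝ) * F i) * G (n + 1 - i)
        = ∑ i ∈ range (n + 1), ((n.choose i : ℝ) * F i) * G (n - i + 1) := by
      refine Finset.sum_congr rfl fun i hi => ?_
      have : n + 1 - i = n - i + 1 := by
        have := Nat.lt_succ_iff.mp (Finset.mem_range.mp hi); omega
      rw [this]
    rw [e3] at e2
    rw [Nat.choose_succ_self] at e2
    simp only [Nat.cast_zero, zero_mul, add_zero] at e2
    rw [← e2, e1]
    simp only [Nat.succ_sub_succ, Nat.choose_zero_right, Nat.cast_one, one_mul]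
  rw [h2]
  ring

/-- On an open set, the iterated derivative within the set equals the global one. -/
lemma itDW_eq_itD (n : ℕ) {s : Set ℝ} (hs : IsOpen s) {x : ℝ} (hx : x ∈ s) (f : ℝ → ℝ) :
    iteratedDerivWithin n f s x = iteratedDeriv n f x := by
  rw [iteratedDerivWithin, iteratedDeriv, iteratedFDerivWithin_of_isOpen n hs hx]

/-- Leibniz rule for iterated derivatives within a set with unique derivatives. -/
lemma my_leibniz {s : Set ℝ} (hs : UniqueDiffOn ℝ s) :
    ∀ (n : ℕ) (f g : ℝ → ℝ), ContDiffOn ℝ n f s → ContDiffOn ℝ n g s →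
      ∀ x ∈ s, iteratedDerivWithin n (fun y => f y * g y) s x =
        ∑ i ∈ Finset.range (n + 1), (n.choose i : ℝ) *
          iteratedDerivWithin i f s x * iteratedDerivWithin (n - i) g s x := by
  intro n
  induction n with
  | zero => intro f g hf hg x hx; simp
  | succ n IH =>
    intro f g hf hg x hx
    have hle : (n : WithTop ℕ∞) ≤ ((n + 1 : ℕ) : WithTop ℕ∞) := by
      exact_mod_cast Nat.le_succ n
    have hf' : ContDiffOn ℝ n f s := hf.of_le hle
    have hg' : ContDiffOn ℝ n g s := hg.of_le hle
    have hF : ∀ i, i ≤ n → HasDerivWithinAt (iteratedDerivWithin i f s)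
        (iteratedDerivWithin (i + 1) f s x) s x := by
      intro i hi
      have hlt : (i : WithTop ℕ∞) < ((n + 1 : ℕ) : WithTop ℕ∞) := by
        exact_mod_cast Nat.lt_succ_of_le hi
      have hd : DifferentiableOn ℝ (iteratedDerivWithin i f s) s :=
        hf.differentiableOn_iteratedDerivWithin hlt hs
      have h := (hd x hx).hasDerivWithinAt
      rwa [← iteratedDerivWithin_succ] at h
    have hG : ∀ i, i ≤ n → HasDerivWithinAt (iteratedDerivWithin i g s)
        (iteratedDerivWithin (i + 1) g s x) s x := by
      intro i hi
      have hlt : (i : WithTop ℕ∞) < ((n + 1 : ℕ) : WithTop ℕ∞) := by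
        exact_mod_cast Nat.lt_succ_of_le hi
      have hd : DifferentiableOn ℝ (iteratedDerivWithin i g s) s :=
        hg.differentiableOn_iteratedDerivWithin hlt hs
      have h := (hd x hx).hasDerivWithinAt
      rwa [← iteratedDerivWithin_succ] at h
    rw [iteratedDerivWithin_succ]
    have hcong : derivWithin (iteratedDerivWithin n (fun y => f y * g y) s) s x =
        derivWithin (fun y => ∑ i ∈ Finset.range (n + 1), (n.choose i : ℝ) *
          iteratedDerivWithin i f s y * iteratedDerivWithin (n - i) g s y) s x :=
      derivWithin_congr (fun y hy => IH f g hf' hg' y hy) (IH f g hf' hg' x hx)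
    rw [hcong]
    have hsum : HasDerivWithinAt
        (fun y => ∑ i ∈ Finset.range (n + 1), (n.choose i : ℝ) *
          iteratedDerivWithin i f s y * iteratedDerivWithin (n - i) g s y)
        (∑ i ∈ Finset.range (n + 1),
          (((n.choose i : ℝ) * iteratedDerivWithin (i + 1) f s x) *
              iteratedDerivWithin (n - i) g s x
            + ((n.choose i : ℝ) * iteratedDerivWithin i f s x) *
              iteratedDerivWithin (n - i + 1) g s x)) s x := by
      refine HasDerivWithinAt.fun_sum fun i hi => ?_
      have hi' : i ≤ n := Nat.lt_succ_iff.mp (Finset.mem_range.mp hi)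
      exact ((hF i hi').const_mul ((n.choose i : ℝ))).mul (hG (n - i) (Nat.sub_le n i))
    rw [hsum.derivWithin (hs x hx)]
    exact sum_pascal_aux n (fun i => iteratedDerivWithin i f s x)
      (fun i => iteratedDerivWithin i g s x)

/-- If `g` is `(μ-1)` times continuously differentiable in a neighborhood of `x₀`,
`f = g²`, `g(x₀) ≠ 0` and `f^{(s)}(x₀) = 0` for `s = 1,…,μ-1`, then `g^{(s)}(x₀) = 0`
for `s = 1,…,μ-1`. -/
theorem stmt_13 (μ : ℕ) (hμ : 1 ≤ μ) (g : ℝ → ℝ) (x₀ : ℝ)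
    (U : Set ℝ) (hU : U ∈ nhds x₀) (hg : ContDiffOn ℝ ((μ - 1 : ℕ) : ℕ∞) g U)
    (f : ℝ → ℝ) (hf : f = fun x => (g x) ^ 2)
    (hg0 : g x₀ ≠ 0)
    (hfder : ∀ s : ℕ, 1 ≤ s → s ≤ μ - 1 → iteratedDeriv s f x₀ = 0) :
    ∀ s : ℕ, 1 ≤ s → s ≤ μ - 1 → iteratedDeriv s g x₀ = 0 := by
  have hxt : x₀ ∈ interior U := mem_interior_iff_mem_nhds.2 hU
  have hto : IsOpen (interior U) := isOpen_interior
  have hud : UniqueDiffOn ℝ (interior U) := hto.uniqueDiffOn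
  have hgi : ContDiffOn ℝ ((μ - 1 : ℕ) : ℕ∞) g (interior U) := hg.mono interior_subset
  intro s
  induction s using Nat.strong_induction_on with
  | _ s IH =>
    intro hs1 hs2
    have hgs : ContDiffOn ℝ (s : ℕ∞) g (interior U) :=
      hgi.of_le (by exact_mod_cast hs2)
    have key := my_leibniz hud s g g hgs hgs x₀ hxt
    have hfg : iteratedDerivWithin s f (interior U) x₀ =
        iteratedDerivWithin s (fun y => g y * g y) (interior U) x₀ := by
      have hfe : f = fun y => g y * g y := by funext y; rw [hf]; ring
      rw [hfe]
    have h0 : iteratedDeriv s f x₀ = 0 := hfder s hs1 hs2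
    rw [← itDW_eq_itD s hto hxt f, hfg, key] at h0
    rw [Finset.sum_range_succ] at h0
    have hs0 : (0 : ℕ) ∈ Finset.range s := Finset.mem_range.2 hs1
    have hmid : ∀ i ∈ Finset.range s, i ≠ 0 →
        (s.choose i : ℝ) * iteratedDerivWithin i g (interior U) x₀ *
          iteratedDerivWithin (s - i) g (interior U) x₀ = 0 := by
      intro i hi hne
      have hi' : i < s := Finset.mem_range.mp hi
      have hz : iteratedDerivWithin i g (interior U) x₀ = 0 := by
        rw [itDW_eq_itD i hto hxt]
        exact IH i hi' (Nat.one_le_iff_ne_zero.2 hne) (le_trans (Nat.le_of_lt hi') hs2)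
      rw [hz]; ring
    rw [Finset.sum_eq_single_of_mem 0 hs0 hmid] at h0
    simp only [Nat.choose_zero_right, Nat.choose_self, Nat.cast_one, Nat.sub_zero,
      Nat.sub_self, iteratedDerivWithin_zero, one_mul] at h0
    set D := iteratedDerivWithin s g (interior U) x₀ with hD
    have h2 : g x₀ * D = 0 := by
      have : 2 * (g x₀ * D) = 0 := by linear_combination h0
      linarith
    have hDz : D = 0 := by
      rcases mul_eq_zero.1 h2 with h | h
      · exact absurd h hg0
      · exact h
    rw [← itDW_eq_itD s hto hxt g]
    exact hDz
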